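/- Let σ and m be positive integers. Then every weighted bipartite graph with both vertex parts of size σ and total weight m admits a matching of weight at least ⌈m/σ⌉; that is, for every weight function w : Fin σ → Fin σ → ℕ with ∑_{u,v} w u v = m, there exists a matching M whose weight is at least the ceiling of m/σ. -/

import Mathlib

/-- `M` is a matching: no two distinct chosen edges share an endpoint. -/
def IsMatching {σ : ℕ} (M : Finset (Fin σ × Fin σ)) : Prop :=
  ∀ e ∈ M, ∀ f ∈ M, e ≠ f → e.1 ≠ f.1 ∧ e.2 ≠ f.2

/-- The weight of a matching `M` with respect to the weight function `w`. -/
def matchingWeight {σ : ℕ} (w : Fin σ → Fin σ → ℕ) (M : Finset (Fin σ × Fin σ)) : ℕ :=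
  ∑ e ∈ M, w e.1 e.2

theorem exists_matching_ge_ceil
    (σ m : ℕ) (hσ : 0 < σ) (hm : 0 < m)
    (w : Fin σ → Fin σ → ℕ) (hw : (∑ u, ∑ v, w u v) = m) :
    ∃ M : Finset (Fin σ × Fin σ), IsMatching M ∧
      ⌈(m : ℚ) / (σ : ℚ)⌉ ≤ (matchingWeight w M : ℤ) := by
  have : NeZero σ := ⟨hσ.ne'⟩
  set W : Fin σ → ℕ := fun k => ∑ u, w u (u + k) with hW
  have hsum : ∑ k, W k = m := by
    rw [hW, Finset.sum_comm, ← hw]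
    refine Finset.sum_congr rfl fun u _ => ?_
    exact Fintype.sum_equiv (Equiv.addLeft u) _ _ (fun k => rfl)
  -- find a diagonal with weight at least m/σ
  have hex : ∃ k : Fin σ, m ≤ σ * W k := by
    by_contra h
    push_neg at h
    have h1 : ∑ k : Fin σ, σ * W k ≤ ∑ _k : Fin σ, (m - 1) :=
      Finset.sum_le_sum fun k _ => by have := h k; omega
    rw [← Finset.mul_sum, hsum] at h1
    simp only [Finset.sum_const, Finset.card_univ, Fintype.card_fin, smul_eq_mul] at h1
    have h2 : σ * (m - 1) < σ * m := (Nat.mul_lt_mul_left hσ).mpr (by omega)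
    omega
  obtain ⟨k, hk⟩ := hex
  set f : Fin σ → Fin σ × Fin σ := fun u => (u, u + k) with hf
  have hinj : Function.Injective f := by
    intro a b hab
    exact congrArg Prod.fst hab
  refine ⟨Finset.univ.image f, ?_, ?_⟩
  · intro e he fe hfe hne
    simp only [Finset.mem_image, Finset.mem_univ, true_and] at he hfe
    obtain ⟨a, rfl⟩ := he
    obtain ⟨b, rfl⟩ := hfe
    have hab : a ≠ b := fun h => hne (by rw [h])
    exact ⟨hab, fun h => hab (by simpa [hf] using h)⟩
  · have hwM : matchingWeight w (Finset.univ.image f) = W k := by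
      rw [matchingWeight, Finset.sum_image (fun a _ b _ h => hinj h)]
    rw [hwM]
    rw [Int.ceil_le]
    rw [div_le_iff₀ (by exact_mod_cast hσ)]
    push_cast
    have : (m : ℚ) ≤ (σ : ℚ) * (W k : ℚ) := by exact_mod_cast hk
    linarith
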